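/- For A_{K,r} the image of the weighted symmetrization operator Ψ'_r(P) = Δ(x)^{-1} Σ_{σ∈S_r} (−1)^{ℓ(σ)} σ( ∏_{i<j, γ∈Γ}(x_i − γx_j) · P ), every element of A_{K,r} vanishes on the 'wheel' variety Z_r = ∪_α { S_r-orbits of (x_1,…,x_r) : x_1 = α x_2, x_2 = ᾱ x_3 }, where α runs over the Weil numbers. -/

import Mathlib

open Finset

/-- **Vanishing of the image of the weighted symmetrization on the wheel
variety.**  With `Γ = {α_1, ᾱ_1, …, α_g, ᾱ_g, q⁻¹}`,
`Ψ'_r(P) = Δ(x)⁻¹ Σ_σ (-1)^{ℓ(σ)} σ(∏_{i<j, γ∈Γ} (x_i - γ x_j) · P)` vanishes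
at every point `z` of the wheel variety: whenever there are distinct indices
`i, j, k` and a Weil number `α_l` with `z_i = α_l z_j` and `z_j = ᾱ_l z_k`. -/
theorem stmt8 (g r : ℕ) (q : ℂ) (hq : q ≠ 0)
    (α αbar : Fin g → ℂ) (hweil : ∀ l, α l * αbar l = q)
    (hα0 : ∀ l, α l ≠ 0) (hαbar0 : ∀ l, αbar l ≠ 0)
    (P : (Fin r → ℂ) → ℂ) (z : Fin r → ℂ)
    (i j k : Fin r) (hij : i ≠ j) (hjk : j ≠ k) (hik : i ≠ k)
    (l : Fin g) (h1 : z i = α l * z j) (h2 : z j = αbar l * z k) :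
    (∑ σ : Equiv.Perm (Fin r), ((Equiv.Perm.sign σ : ℤ) : ℂ) *
        (∏ p ∈ Finset.univ.filter (fun p : Fin r × Fin r => p.1 < p.2),
          ((z (σ p.1) - q⁻¹ * z (σ p.2)) *
            ∏ t : Fin g, ((z (σ p.1) - α t * z (σ p.2)) *
              (z (σ p.1) - αbar t * z (σ p.2))))) * P (z ∘ σ)) /
      (∏ p ∈ Finset.univ.filter (fun p : Fin r × Fin r => p.1 < p.2),
        (z p.1 - z p.2)) = 0 := by
  rw [div_eq_zero_iff]
  left
  apply Finset.sum_eq_zero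
  intro σ _
  set a := σ⁻¹ i with ha'
  set b := σ⁻¹ j with hb'
  set c := σ⁻¹ k with hc'
  have ha : σ a = i := σ.apply_symm_apply i
  have hb : σ b = j := σ.apply_symm_apply j
  have hc : σ c = k := σ.apply_symm_apply k
  have hab : a ≠ b := fun h => hij (by rw [← ha, ← hb, h])
  have hbc : b ≠ c := fun h => hjk (by rw [← hb, ← hc, h])
  have key : (∏ p ∈ Finset.univ.filter (fun p : Fin r × Fin r => p.1 < p.2),
          ((z (σ p.1) - q⁻¹ * z (σ p.2)) *
            ∏ t : Fin g, ((z (σ p.1) - α t * z (σ p.2)) *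
              (z (σ p.1) - αbar t * z (σ p.2))))) = 0 := by
    by_cases hab' : a < b
    · apply Finset.prod_eq_zero (i := (a, b)) (by simp [hab'])
      have hz : z (σ a) - α l * z (σ b) = 0 := by rw [ha, hb, h1]; ring
      rw [mul_eq_zero]; right
      exact Finset.prod_eq_zero (Finset.mem_univ l) (by rw [hz, zero_mul])
    · by_cases hbc' : b < c
      · apply Finset.prod_eq_zero (i := (b, c)) (by simp [hbc'])
        have hz : z (σ b) - αbar l * z (σ c) = 0 := by rw [hb, hc, h2]; ring
        rw [mul_eq_zero]; right
        exact Finset.prod_eq_zero (Finset.mem_univ l)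
          (by rw [mul_eq_zero]; right; exact hz)
      · have hba : b < a := lt_of_le_of_ne (not_lt.mp hab') (Ne.symm hab)
        have hcb : c < b := lt_of_le_of_ne (not_lt.mp hbc') (Ne.symm hbc)
        have hca : c < a := hcb.trans hba
        apply Finset.prod_eq_zero (i := (c, a)) (by simp [hca])
        have hz : z (σ c) - q⁻¹ * z (σ a) = 0 := by
          rw [ha, hc, h1, h2]
          have : α l * (αbar l * z k) = q * z k := by rw [← mul_assoc, hweil]
          rw [this]
          field_simp
          ring
        rw [mul_eq_zero]; left; exact hz
  rw [key, mul_zero, zero_mul]
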